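/- Let G be a connected simple graph on a finite vertex set V and let v ∈ V be an articulation point of G, i.e., the induced subgraph of G on V \ {v} is not connected (there exist vertices x ≠ v and y ≠ v with no path between them avoiding v). Let τ_v(G) denote the local complementation of G at v. Then the induced subgraph of τ_v(G) on V \ {v} is connected; in particular, v is not an articulation point of τ_v(G). -/

import Mathlib

/-- Local complementation of a simple graph `G` at a vertex `v`: distinct vertices `x, y`
are adjacent iff (`x ~ y` in `G`) XOR (both `x` and `y` are neighbors of `v` in `G`). -/
def localComp {V : Type*} (G : SimpleGraph V) (v : V) : SimpleGraph V where
  Adj x y := x ≠ y ∧ Xor' (G.Adj x y) (G.Adj x v ∧ G.Adj y v)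
  symm := by
    constructor
    intro x y h
    obtain ⟨hxy, h⟩ := h
    refine ⟨hxy.symm, ?_⟩
    unfold Xor' at h ⊢
    have := G.adj_comm x y
    rw [this, and_comm] at h
    exact h
  loopless := by
    constructor
    intro x h
    exact h.1 rfl

section Aux

variable {V : Type*} (G : SimpleGraph V) (v : V)

/-- Along any walk in `G` from `x ≠ v` to `v`, there is a neighbor of `v` that is
`H`-reachable from `x`, where `H = G.induce {w | w ≠ v}`. -/
lemma auxA {x u : V} (w : G.Walk x u) : v = u → ∀ (hx : x ≠ v),
    ∃ a : {w : V | w ≠ v}, G.Adj ↑a v ∧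
      (G.induce {w : V | w ≠ v}).Reachable ⟨x, hx⟩ a := by
  induction w with
  | nil => intro hu hx; exact absurd hu.symm hx
  | @cons x y u h p ih =>
    intro hu hx
    subst hu
    by_cases hy : y = v
    · subst hy
      exact ⟨⟨x, hx⟩, h, SimpleGraph.Reachable.refl _⟩
    · obtain ⟨a, ha, hr⟩ := ih rfl hy
      refine ⟨a, ha, ?_⟩
      have hadj : (G.induce {w : V | w ≠ v}).Adj ⟨x, hx⟩ ⟨y, hy⟩ := h
      exact hadj.reachable.trans hr

/-- Given an `H`-walk from `x` to a neighbor `a` of `v`, the first neighbor of `v` on it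
is reachable from `x` in the induced local complement `T`. -/
lemma auxB : ∀ {x a : {w : V | w ≠ v}} (w : (G.induce {w : V | w ≠ v}).Walk x a),
    G.Adj ↑a v →
    ∃ b : {w : V | w ≠ v}, G.Adj ↑b v ∧
      ((localComp G v).induce {w : V | w ≠ v}).Reachable x b := by
  intro x a w
  induction w with
  | nil => intro ha; exact ⟨_, ha, SimpleGraph.Reachable.refl _⟩
  | @cons x y _ h p ih =>
    intro ha
    by_cases hx : G.Adj ↑x v
    · exact ⟨x, hx, SimpleGraph.Reachable.refl _⟩
    · obtain ⟨b, hb, hr⟩ := ih ha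
      refine ⟨b, hb, ?_⟩
      have hG : G.Adj ↑x ↑y := h
      have hadj : ((localComp G v).induce {w : V | w ≠ v}).Adj x y := by
        refine ⟨fun e => hG.ne e, Or.inl ⟨hG, fun hc => hx hc.1⟩⟩
      exact hadj.reachable.trans hr

/-- Every vertex of `V \ {v}` reaches a neighbor of `v` inside the induced local
complement. -/
lemma auxReach (hconn : G.Connected) (x : {w : V | w ≠ v}) :
    ∃ b : {w : V | w ≠ v}, G.Adj ↑b v ∧
      ((localComp G v).induce {w : V | w ≠ v}).Reachable x b := by
  obtain ⟨w⟩ := hconn.preconnected ↑x v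
  obtain ⟨a, ha, hr⟩ := auxA G v w rfl x.2
  obtain ⟨w'⟩ := hr
  have := auxB G v w' ha
  simpa using this

/-- Two neighbors of `v` in different `H`-components are adjacent in the induced local
complement. -/
lemma auxC {a b : {w : V | w ≠ v}} (ha : G.Adj ↑a v) (hb : G.Adj ↑b v)
    (hnr : ¬ (G.induce {w : V | w ≠ v}).Reachable a b) :
    ((localComp G v).induce {w : V | w ≠ v}).Adj a b := by
  have hne : (a : V) ≠ b := by
    intro e
    exact hnr (by rw [Subtype.ext e])
  have hnadj : ¬ G.Adj ↑a ↑b := by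
    intro hadj
    exact hnr (SimpleGraph.Adj.reachable (by exact hadj))
  exact ⟨hne, Or.inr ⟨⟨ha, hb⟩, hnadj⟩⟩

end Aux

/-- If `G` is connected and `v` is an articulation point of `G` (there are
vertices `x ≠ v`, `y ≠ v` with no path between them avoiding `v`), then the induced
subgraph of the local complementation `τ_v(G)` on `V \ {v}` is connected; in particular,
`v` is not an articulation point of `τ_v(G)`. -/
theorem localComp_kills_articulation_point {V : Type*} [Fintype V] [DecidableEq V]
    (G : SimpleGraph V) (v : V) (hconn : G.Connected)
    (hart : ∃ x y : {w : V | w ≠ v}, ¬ (G.induce {w : V | w ≠ v}).Reachable x y) :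
    ((localComp G v).induce {w : V | w ≠ v}).Connected := by
  obtain ⟨x₀, y₀, hxy⟩ := hart
  -- neighbors of v in the two components of x₀ and y₀
  obtain ⟨w₀⟩ := hconn.preconnected ↑x₀ v
  obtain ⟨b₁, hb₁, hr₁⟩ := auxA G v w₀ rfl x₀.2
  obtain ⟨w₁⟩ := hconn.preconnected ↑y₀ v
  obtain ⟨b₂, hb₂, hr₂⟩ := auxA G v w₁ rfl y₀.2
  have hr₁' : (G.induce {w : V | w ≠ v}).Reachable x₀ b₁ := by simpa using hr₁
  have hr₂' : (G.induce {w : V | w ≠ v}).Reachable y₀ b₂ := by simpa using hr₂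
  have hb12 : ¬ (G.induce {w : V | w ≠ v}).Reachable b₁ b₂ := by
    intro h
    exact hxy (hr₁'.trans (h.trans hr₂'.symm))
  -- every neighbor of v reaches b₁ in T
  have key : ∀ a : {w : V | w ≠ v}, G.Adj ↑a v →
      ((localComp G v).induce {w : V | w ≠ v}).Reachable a b₁ := by
    intro a ha
    by_cases hH : (G.induce {w : V | w ≠ v}).Reachable a b₁
    · have hab₂ : ¬ (G.induce {w : V | w ≠ v}).Reachable a b₂ := by
        intro h
        exact hb12 (hH.symm.trans h)
      have h1 := auxC G v ha hb₂ hab₂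
      have h2 := auxC G v hb₂ hb₁ (fun h => hb12 h.symm)
      exact h1.reachable.trans h2.reachable
    · exact (auxC G v ha hb₁ hH).reachable
  rw [SimpleGraph.connected_iff]
  refine ⟨fun x y => ?_, ⟨b₁⟩⟩
  obtain ⟨bx, hbx, trx⟩ := auxReach G v hconn x
  obtain ⟨by', hby, try'⟩ := auxReach G v hconn y
  exact (trx.trans (key bx hbx)).trans ((try'.trans (key by' hby)).symm)
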